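/- Assume ‖a‖² ≥ 2 and that the good set G is nonempty. For each m ∈ G let x_m be the unique positive solution of R_{h_m}(x) = x·R'_{h_m}(x) (where R'_{h_m} denotes the derivative of P ↦ R_{h_m}(P)), and let λ_m > 0 be the unique value with P^KKT_{h_m}(λ_m) = x_m. Set λ_o = min_{m∈G} λ_m and P̄_o = Σ_{m∈G} f_m·P^KKT_{h_m}(λ_o). If P̄ > P̄_o, then every optimal solution (P*_1,…,P*_M) of DP1^(s) has active set exactly equal to the good set: {m : P*_m > 0} = G. -/

import Mathlib

open scoped BigOperators Classical
open Finset

noncomputable section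

/-- Euclidean inner product on `Fin L → ℝ`. -/
def ip {L : ℕ} (x y : Fin L → ℝ) : ℝ := ∑ i, x i * y i

/-- Squared Euclidean norm on `Fin L → ℝ`. -/
def nsq {L : ℕ} (x : Fin L → ℝ) : ℝ := ∑ i, (x i) ^ 2

/-- ε(h) = ‖h‖²‖a‖² − ⟨h,a⟩². -/
def eps {L : ℕ} (a h : Fin L → ℝ) : ℝ := nsq h * nsq a - (ip h a) ^ 2

/-- Symmetric-policy computation rate R_h(P). -/
def Rsym {L : ℕ} (a h : Fin L → ℝ) (P : ℝ) : ℝ :=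
  (1 / 2) * Real.logb 2 ((1 + P * nsq h) / (nsq a + P * eps a h))

/-- The vector √p∘h with entries √(p_l)·h_l. -/
def sqp {L : ℕ} (p h : Fin L → ℝ) : Fin L → ℝ := fun l => Real.sqrt (p l) * h l

/-- Asymmetric-policy computation rate R(h,p). -/
def Rasym {L : ℕ} (a h p : Fin L → ℝ) : ℝ :=
  (1 / 2) * Real.logb 2 ((1 + nsq (sqp p h)) /
    (nsq a + (nsq (sqp p h) * nsq a - (ip (sqp p h) a) ^ 2)))

/-- The KKT water-filling-type solution P^KKT_h(λ). -/
def PKKT {L : ℕ} (a h : Fin L → ℝ) (lam : ℝ) : ℝ :=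
  if ∃ t : ℝ, h = t • a then 1 / lam - 1 / nsq h
  else (-(2 * nsq h * nsq a - (ip h a) ^ 2) +
      Real.sqrt ((2 * nsq h * nsq a - (ip h a) ^ 2) ^ 2 -
        4 * (nsq h * eps a h) * (nsq a - (ip h a) ^ 2 / lam))) /
    (2 * (nsq h * eps a h))

/-- generic rate function -/
def Rt (A H E : ℝ) (P : ℝ) : ℝ := (1 / 2) * Real.logb 2 ((1 + P * H) / (A + P * E))
/-- generic derivative formula -/
def Dt (A H E : ℝ) (P : ℝ) : ℝ := (H * A - E) / (2 * Real.log 2 * ((1 + P * H) * (A + P * E)))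

lemma Rsym_eq_Rt {L : ℕ} (a h : Fin L → ℝ) : Rsym a h = Rt (nsq a) (nsq h) (eps a h) := rfl

lemma log2pos : (0:ℝ) < Real.log 2 := Real.log_pos one_lt_two

section chan
variable {A H E : ℝ} (hA : 2 ≤ A) (hH : 0 < H) (hE : 0 ≤ E)
include hA hH hE

lemma pos_u {p : ℝ} (hp : 0 ≤ p) : 0 < 1 + p * H := by nlinarith
lemma pos_v {p : ℝ} (hp : 0 ≤ p) : 0 < A + p * E := by nlinarith

lemma Dt_pos (hEH : E < H) {p : ℝ} (hp : 0 ≤ p) : 0 < Dt A H E p := by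
  have hc : 0 < H * A - E := by nlinarith
  have h1 := pos_u hA hH hE hp
  have h2 := pos_v hA hH hE hp
  exact div_pos hc (by positivity)

/-- ratio difference formula -/
lemma ratio_pos {p : ℝ} (hp : 0 ≤ p) : 0 < (1 + p * H) / (A + p * E) :=
  div_pos (pos_u hA hH hE hp) (pos_v hA hH hE hp)

/-- strict monotonicity of Rt on [0,∞) for good channels -/
lemma Rt_strictMono (hEH : E < H) {p q : ℝ} (hp : 0 ≤ p) (hpq : p < q) :
    Rt A H E p < Rt A H E q := by
  have hq : 0 ≤ q := le_trans hp hpq.le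
  have h1p := pos_u hA hH hE hp
  have h2p := pos_v hA hH hE hp
  have h1q := pos_u hA hH hE hq
  have h2q := pos_v hA hH hE hq
  have hlt : (1 + p * H) / (A + p * E) < (1 + q * H) / (A + q * E) := by
    rw [div_lt_div_iff₀ h2p h2q]
    have hc : 0 < H * A - E := by nlinarith
    nlinarith [mul_pos (sub_pos.mpr hpq) hc]
  have := Real.logb_lt_logb one_lt_two (ratio_pos hA hH hE hp) hlt
  unfold Rt
  linarith

/-- bad channels: rate always negative -/
lemma Rt_neg_bad (hHE : H ≤ E) {p : ℝ} (hp : 0 ≤ p) : Rt A H E p < 0 := by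
  have h1 := pos_u hA hH hE hp
  have h2 := pos_v hA hH hE hp
  have hlt : (1 + p * H) / (A + p * E) < 1 := by
    rw [div_lt_one h2]; nlinarith
  have := Real.logb_neg one_lt_two (ratio_pos hA hH hE hp) hlt
  unfold Rt; linarith

/-- tangent-line (concavity) inequality -/
lemma Rt_tangent (hEH : E < H) {p q : ℝ} (hp : 0 ≤ p) (hq : 0 ≤ q) :
    Rt A H E q - Rt A H E p ≤ Dt A H E p * (q - p) := by
  have hc : 0 < H * A - E := by nlinarith
  have h1p := pos_u hA hH hE hp
  have h2p := pos_v hA hH hE hp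
  have h1q := pos_u hA hH hE hq
  have h2q := pos_v hA hH hE hq
  have hrp := ratio_pos hA hH hE hp
  have hrq := ratio_pos hA hH hE hq
  have hl2 := log2pos
  -- step 1: Rt q - Rt p = log(rq/rp) / (2 log 2)
  have hdiff : Rt A H E q - Rt A H E p =
      Real.log (((1 + q * H) / (A + q * E)) / ((1 + p * H) / (A + p * E))) / (2 * Real.log 2) := by
    rw [Real.log_div (ne_of_gt hrq) (ne_of_gt hrp)]
    unfold Rt Real.logb
    field_simp
  rw [hdiff]
  have hlog : Real.log (((1 + q * H) / (A + q * E)) / ((1 + p * H) / (A + p * E)))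
      ≤ ((1 + q * H) / (A + q * E)) / ((1 + p * H) / (A + p * E)) - 1 :=
    Real.log_le_sub_one_of_pos (div_pos hrq hrp)
  have hratio : ((1 + q * H) / (A + q * E)) / ((1 + p * H) / (A + p * E)) - 1
      = (q - p) * (H * A - E) / ((A + q * E) * (1 + p * H)) := by
    field_simp
    ring
  have hstep : (q - p) * (H * A - E) / ((A + q * E) * (1 + p * H))
      ≤ (q - p) * (H * A - E) / ((A + p * E) * (1 + p * H)) := by
    rw [div_le_div_iff₀ (by positivity) (by positivity)]
    nlinarith [mul_nonneg (mul_nonneg (mul_nonneg (sq_nonneg (q - p)) hc.le) hE) h1p.le]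
  have hDt : (q - p) * (H * A - E) / ((A + p * E) * (1 + p * H)) / (2 * Real.log 2)
      = Dt A H E p * (q - p) := by
    unfold Dt; field_simp
  calc Real.log (((1 + q * H) / (A + q * E)) / ((1 + p * H) / (A + p * E))) / (2 * Real.log 2)
      ≤ (((1 + q * H) / (A + q * E)) / ((1 + p * H) / (A + p * E)) - 1) / (2 * Real.log 2) := by
        apply div_le_div_of_nonneg_right ?_ (by positivity)
        exact hlog
    _ = (q - p) * (H * A - E) / ((A + q * E) * (1 + p * H)) / (2 * Real.log 2) := by rw [hratio]
    _ ≤ (q - p) * (H * A - E) / ((A + p * E) * (1 + p * H)) / (2 * Real.log 2) := by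
        apply div_le_div_of_nonneg_right hstep (by positivity)
    _ = Dt A H E p * (q - p) := hDt

/-- Dt strictly decreasing -/
lemma Dt_strictAnti (hEH : E < H) {p q : ℝ} (hp : 0 ≤ p) (hpq : p < q) :
    Dt A H E q < Dt A H E p := by
  have hc : 0 < H * A - E := by nlinarith
  have hq : 0 ≤ q := le_trans hp hpq.le
  have h1p := pos_u hA hH hE hp
  have h2p := pos_v hA hH hE hp
  have h1q := pos_u hA hH hE hq
  have h2q := pos_v hA hH hE hq
  have hl2 := log2pos
  unfold Dt
  apply div_lt_div_of_pos_left hc (by positivity)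
  have hlt : (1 + p * H) * (A + p * E) < (1 + q * H) * (A + q * E) := by
    nlinarith [mul_pos (sub_pos.mpr hpq) (mul_pos hH (lt_of_lt_of_le (by linarith) hA : (0:ℝ) < A)), mul_nonneg (mul_nonneg (sub_pos.mpr hpq).le hE) hp,
      mul_nonneg (mul_nonneg (mul_nonneg (sub_pos.mpr hpq).le (by linarith : (0:ℝ) ≤ p + q)) hH.le) hE]
  have := mul_lt_mul_of_pos_left hlt (by positivity : (0:ℝ) < 2 * Real.log 2)
  linarith

/-- derivative of Rt at positive points -/
lemma Rt_deriv (hEH : E < H) {p : ℝ} (hp : 0 < p) : deriv (Rt A H E) p = Dt A H E p := by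
  have hl2 := log2pos
  have h1p := pos_u hA hH hE hp.le
  have h2p := pos_v hA hH hE hp.le
  -- Rt agrees with the log-difference form on a neighborhood of p
  have hev : Rt A H E =ᶠ[nhds p] fun P =>
      (Real.log (1 + P * H) - Real.log (A + P * E)) / (2 * Real.log 2) := by
    have hs : Set.Ioi (0:ℝ) ∈ nhds p := Ioi_mem_nhds hp
    filter_upwards [hs] with P hP
    have h1 := pos_u hA hH hE (le_of_lt hP)
    have h2 := pos_v hA hH hE (le_of_lt hP)
    unfold Rt Real.logb
    rw [Real.log_div (ne_of_gt h1) (ne_of_gt h2)]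
    field_simp
  rw [hev.deriv_eq]
  have d1 : HasDerivAt (fun P : ℝ => 1 + P * H) H p := by
    simpa using (hasDerivAt_mul_const H).const_add 1
  have d2 : HasDerivAt (fun P : ℝ => A + P * E) E p := by
    simpa using (hasDerivAt_mul_const E).const_add A
  have d1' : HasDerivAt (fun P : ℝ => Real.log (1 + P * H)) (H / (1 + p * H)) p :=
    d1.log (ne_of_gt h1p)
  have d2' : HasDerivAt (fun P : ℝ => Real.log (A + P * E)) (E / (A + p * E)) p :=
    d2.log (ne_of_gt h2p)
  have d3 := (d1'.sub d2').div_const (2 * Real.log 2)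
  rw [show deriv (fun P : ℝ => (Real.log (1 + P * H) - Real.log (A + P * E)) / (2 * Real.log 2)) p = (H / (1 + p * H) - E / (A + p * E)) / (2 * Real.log 2) from d3.deriv]
  unfold Dt
  field_simp
  ring
end chan

section vec
variable {L : ℕ} {a h : Fin L → ℝ}

lemma nsq_nonneg (x : Fin L → ℝ) : 0 ≤ nsq x :=
  Finset.sum_nonneg fun i _ => sq_nonneg _

lemma nsq_pos (hx : h ≠ 0) : 0 < nsq h := by
  rcases (nsq_nonneg h).lt_or_eq with h1 | h1
  · exact h1
  · exfalso; apply hx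
    have := (Finset.sum_eq_zero_iff_of_nonneg (fun i _ => sq_nonneg (h i))).mp h1.symm
    funext i
    have := this i (Finset.mem_univ i)
    exact pow_eq_zero_iff (n := 2) (by norm_num) |>.mp this

lemma eps_nonneg : 0 ≤ eps a h := by
  have := Finset.sum_mul_sq_le_sq_mul_sq Finset.univ h a
  unfold eps nsq ip
  linarith

lemma eps_zero_collinear (ha : a ≠ 0) (he : eps a h = 0) : ∃ t : ℝ, h = t • a := by
  have hA : 0 < nsq a := nsq_pos ha
  refine ⟨ip h a / nsq a, ?_⟩
  have key : ∑ i, (h i - ip h a / nsq a * a i) ^ 2 = 0 := by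
    have expand : ∑ i, (h i - ip h a / nsq a * a i) ^ 2
        = nsq h - 2 * (ip h a / nsq a) * ip h a + (ip h a / nsq a) ^ 2 * nsq a := by
      calc ∑ i, (h i - ip h a / nsq a * a i) ^ 2
          = ∑ i, ((h i) ^ 2 - 2 * (ip h a / nsq a) * (h i * a i)
              + (ip h a / nsq a) ^ 2 * (a i) ^ 2) := by
            apply Finset.sum_congr rfl; intros; ring
        _ = _ := by
            rw [Finset.sum_add_distrib, Finset.sum_sub_distrib, ← Finset.mul_sum,
              ← Finset.mul_sum]
            rfl
    rw [expand]
    have he' : nsq h * nsq a - ip h a ^ 2 = 0 := he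
    field_simp
    first
    | linear_combination he'
    | linear_combination (nsq a ^ 2 - 1) * he'
    | linear_combination nsq a ^ 2 * he'
    | linear_combination (nsq a - 1) * he'
    | linear_combination nsq a * he'
  funext i
  have := (Finset.sum_eq_zero_iff_of_nonneg (fun i _ => sq_nonneg (h i - ip h a / nsq a * a i))).mp key i (Finset.mem_univ i)
  have h2 : h i - ip h a / nsq a * a i = 0 := by
    exact pow_eq_zero_iff (n := 2) (by norm_num) |>.mp this
  simp [Pi.smul_apply, smul_eq_mul]
  linarith

end vec

section pkkt
variable {L : ℕ} {a h : Fin L → ℝ}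

lemma collinear_eps {t : ℝ} (hcol : h = t • a) : eps a h = 0 ∧ nsq h = t ^ 2 * nsq a := by
  subst hcol
  have h1 : nsq (t • a) = t ^ 2 * nsq a := by
    unfold nsq; rw [Finset.mul_sum]; apply Finset.sum_congr rfl; intros; simp [Pi.smul_apply, smul_eq_mul]; ring
  have h2 : ip (t • a) a = t * (nsq a) := by
    unfold ip nsq; rw [Finset.mul_sum]; apply Finset.sum_congr rfl; intros; simp [Pi.smul_apply, smul_eq_mul]; ring
  constructor
  · unfold eps; rw [h1, h2]; ring
  · exact h1

/-- ip² = H·A − E -/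
lemma ipsq_eq : (ip h a) ^ 2 = nsq h * nsq a - eps a h := by unfold eps; ring

lemma PKKT_anti (ha : a ≠ 0) (hh : h ≠ 0) {μ ν : ℝ} (hμ : 0 < μ) (hμν : μ ≤ ν) :
    PKKT a h ν ≤ PKKT a h μ := by
  have hν : 0 < ν := lt_of_lt_of_le hμ hμν
  unfold PKKT
  by_cases hcol : ∃ t : ℝ, h = t • a
  · rw [if_pos hcol, if_pos hcol]
    have := one_div_le_one_div_of_le hμ hμν
    linarith
  · rw [if_neg hcol, if_neg hcol]
    have hE : 0 < eps a h := by
      rcases eps_nonneg.lt_or_eq with h1 | h1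
      · exact h1
      · exact absurd (eps_zero_collinear ha h1.symm) hcol
    have hH := nsq_pos hh
    have hd : 0 < 2 * (nsq h * eps a h) := by positivity
    rw [div_le_div_iff_of_pos_right hd]
    apply (add_le_add_iff_left _).mpr
    apply Real.sqrt_le_sqrt
    have : (ip h a) ^ 2 / ν ≤ (ip h a) ^ 2 / μ :=
      div_le_div_of_nonneg_left (sq_nonneg _) hμ hμν
    nlinarith [mul_pos hH hE]

/-- the root identity: if PKKT is positive then it satisfies the defining equation -/
lemma PKKT_root (ha : a ≠ 0) (hh : h ≠ 0) (ha2 : 2 ≤ nsq a) (hEH : eps a h < nsq h)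
    {lm : ℝ} (hl : 0 < lm) (hP : 0 < PKKT a h lm) :
    (1 + PKKT a h lm * nsq h) * (nsq a + PKKT a h lm * eps a h)
      = (nsq h * nsq a - eps a h) / lm := by
  have hH := nsq_pos hh
  have hE := eps_nonneg (a := a) (h := h)
  have hc : 0 < nsq h * nsq a - eps a h := by nlinarith
  unfold PKKT at *
  by_cases hcol : ∃ t : ℝ, h = t • a
  · rw [if_pos hcol] at *
    obtain ⟨t, ht⟩ := hcol
    obtain ⟨he0, -⟩ := collinear_eps ht
    rw [he0]
    have hip : (ip h a) ^ 2 = nsq h * nsq a - eps a h := ipsq_eq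
    field_simp
    ring
  · rw [if_neg hcol] at *
    have hE' : 0 < eps a h := by
      rcases hE.lt_or_eq with h1 | h1
      · exact h1
      · exact absurd (eps_zero_collinear ha h1.symm) hcol
    set b := 2 * nsq h * nsq a - (ip h a) ^ 2 with hb
    set d := nsq h * eps a h with hd
    set c := nsq a - (ip h a) ^ 2 / lm with hcdef
    have hbpos : 0 < b := by
      have := ipsq_eq (a := a) (h := h); nlinarith
    have hdpos : 0 < d := by positivity
    set P := (-b + Real.sqrt (b ^ 2 - 4 * d * c)) / (2 * d) with hPdef
    have hdisc : 0 ≤ b ^ 2 - 4 * d * c := by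
      by_contra hneg
      push_neg at hneg
      have : Real.sqrt (b ^ 2 - 4 * d * c) = 0 := Real.sqrt_eq_zero_of_nonpos hneg.le
      rw [hPdef, this] at hP
      have : -b + 0 < 0 := by linarith
      have := div_neg_of_neg_of_pos this (by positivity : (0:ℝ) < 2 * d)
      linarith
    have hsq : (2 * d * P + b) ^ 2 = b ^ 2 - 4 * d * c := by
      have : 2 * d * P + b = Real.sqrt (b ^ 2 - 4 * d * c) := by
        rw [hPdef]; field_simp; ring
      rw [this, Real.sq_sqrt hdisc]
    have hroot : d * P ^ 2 + b * P + c = 0 := by nlinarith [hsq]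
    have hip : (ip h a) ^ 2 = nsq h * nsq a - eps a h := ipsq_eq
    have hcval : c = nsq a - (nsq h * nsq a - eps a h) / lm := by rw [hcdef, hip]
    have hbval : b = nsq h * nsq a + eps a h := by rw [hb]; nlinarith [hip]
    rw [hcval, hbval, hd] at hroot
    field_simp at hroot ⊢
    nlinarith [hroot]

/-- at a positive PKKT point, Dt equals lm / (2 log 2) -/
lemma Dt_PKKT (ha : a ≠ 0) (hh : h ≠ 0) (ha2 : 2 ≤ nsq a) (hEH : eps a h < nsq h)
    {lm : ℝ} (hl : 0 < lm) (hP : 0 < PKKT a h lm) :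
    Dt (nsq a) (nsq h) (eps a h) (PKKT a h lm) = lm / (2 * Real.log 2) := by
  have hH := nsq_pos hh
  have hE := eps_nonneg (a := a) (h := h)
  have hc : 0 < nsq h * nsq a - eps a h := by nlinarith
  have hroot := PKKT_root ha hh ha2 hEH hl hP
  have hl2 := log2pos
  unfold Dt
  rw [hroot]
  have hden : 0 < 2 * Real.log 2 * ((nsq h * nsq a - eps a h) / lm) :=
    mul_pos (by positivity) (div_pos hc hl)
  rw [div_eq_div_iff hden.ne' (by positivity : (0:ℝ) < 2 * Real.log 2).ne']
  field_simp
end pkkt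

lemma Rt_zero_neg {A H E : ℝ} (hA : 2 ≤ A) : Rt A H E 0 < 0 := by
  have h1 : (1 + 0 * H) / (A + 0 * E) = 1 / A := by rw [zero_mul, zero_mul, add_zero]; norm_num
  unfold Rt
  rw [h1]
  have hlt : 1 / A < 1 := by rw [div_lt_one (by linarith)]; linarith
  have := Real.logb_neg one_lt_two (by positivity) hlt
  linarith

lemma sum_single_ite' {M : ℕ} (f : Fin M → ℝ) (g : Fin M) (c : Fin M → ℝ) :
    ∑ m, f m * (if m = g then c m else 0) = f g * c g := by
  rw [Finset.sum_eq_single g]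
  · rw [if_pos rfl]
  · intro b _ hbg; rw [if_neg hbg, mul_zero]
  · intro hg; exact absurd (Finset.mem_univ g) hg

lemma sum_mem_ite {M : ℕ} (T : Finset (Fin M)) (f : Fin M → ℝ) (c : Fin M → ℝ) :
    ∑ m, f m * (if m ∈ T then c m else 0) = ∑ m ∈ T, f m * c m := by
  rw [Finset.sum_congr rfl (fun m _ => by rw [mul_ite, mul_zero])]
  rw [Finset.sum_ite_mem, Finset.univ_inter]


set_option maxHeartbeats 4000000 in
/-- Theorem 2: above the power threshold P̄₀, every optimal solution of
DP1^(s) has active set exactly equal to the good set G. -/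
theorem stmt6 {L M : ℕ} (hL : 1 ≤ L)
    (a : Fin L → ℝ) (ha : a ≠ 0) (haint : ∀ i, ∃ n : ℤ, a i = (n : ℝ))
    (ha2 : 2 ≤ nsq a)
    (h : Fin M → Fin L → ℝ) (hh : ∀ m, h m ≠ 0)
    (f : Fin M → ℝ) (hf : ∀ m, 0 < f m) (hfsum : ∑ m, f m = 1)
    (Pbar : ℝ) (hPbar : 0 < Pbar)
    -- the good set G
    (G : Finset (Fin M)) (hG : G = Finset.univ.filter (fun m => eps a (h m) < nsq (h m)))
    (hGne : G.Nonempty)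
    -- for each m ∈ G, x m is the unique positive solution of R(x) = x·R'(x)
    (x : Fin M → ℝ)
    (hx : ∀ m ∈ G, 0 < x m ∧
      Rsym a (h m) (x m) = x m * deriv (Rsym a (h m)) (x m))
    (hxuniq : ∀ m ∈ G, ∀ y : ℝ, 0 < y →
      Rsym a (h m) y = y * deriv (Rsym a (h m)) y → y = x m)
    -- for each m ∈ G, lam m is the unique value with P^KKT_{h_m}(lam m) = x m
    (lam : Fin M → ℝ)
    (hlam : ∀ m ∈ G, 0 < lam m ∧ PKKT a (h m) (lam m) = x m)
    (hlamuniq : ∀ m ∈ G, ∀ μ : ℝ, 0 < μ → PKKT a (h m) μ = x m → μ = lam m)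
    -- λ₀ and P̄₀
    (lam0 : ℝ) (hlam0 : lam0 = G.inf' hGne lam)
    (Pbar0 : ℝ) (hPbar0 : Pbar0 = ∑ m ∈ G, f m * PKKT a (h m) lam0)
    (hPbig : Pbar0 < Pbar)
    -- an optimal solution of DP1^(s)
    (Pstar : Fin M → ℝ)
    (hfeas : (∀ m, 0 ≤ Pstar m) ∧ ∑ m, f m * Pstar m ≤ Pbar)
    (hopt : ∀ Q : Fin M → ℝ, (∀ m, 0 ≤ Q m) → ∑ m, f m * Q m ≤ Pbar →
      ∑ m, f m * max 0 (Rsym a (h m) (Q m)) ≤ ∑ m, f m * max 0 (Rsym a (h m) (Pstar m))) :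
    ∀ m, 0 < Pstar m ↔ m ∈ G := by
  obtain ⟨hPge, hPle⟩ := hfeas
  have hl2 := log2pos
  have hgood : ∀ m ∈ G, eps a (h m) < nsq (h m) := by
    intro m hm; rw [hG] at hm; exact (Finset.mem_filter.mp hm).2
  have hbad : ∀ m, m ∉ G → nsq (h m) ≤ eps a (h m) := by
    intro m hm; rw [hG] at hm; by_contra hc; push_neg at hc
    exact hm (Finset.mem_filter.mpr ⟨Finset.mem_univ m, hc⟩)
  have hH : ∀ m, 0 < nsq (h m) := fun m => nsq_pos (hh m)
  have hE : ∀ m, 0 ≤ eps a (h m) := fun m => eps_nonneg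
  have hlam0pos : 0 < lam0 := by
    rw [hlam0]
    obtain ⟨m, hm, hmeq⟩ := Finset.exists_mem_eq_inf' hGne lam
    rw [hmeq]; exact (hlam m hm).1
  have hlam0le : ∀ m ∈ G, lam0 ≤ lam m := by
    intro m hm; rw [hlam0]; exact Finset.inf'_le _ hm
  set P0 : Fin M → ℝ := fun m => PKKT a (h m) lam0 with hP0def
  have hxpos : ∀ m ∈ G, 0 < x m := fun m hm => (hx m hm).1
  have hxP0 : ∀ m ∈ G, x m ≤ P0 m := by
    intro m hm
    have := PKKT_anti (a := a) (h := h m) ha (hh m) hlam0pos (hlam0le m hm)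
    rw [(hlam m hm).2] at this; exact this
  have hP0pos : ∀ m ∈ G, 0 < P0 m := fun m hm => lt_of_lt_of_le (hxpos m hm) (hxP0 m hm)
  have hRx : ∀ m ∈ G, Rsym a (h m) (x m)
      = x m * Dt (nsq a) (nsq (h m)) (eps a (h m)) (x m) := by
    intro m hm
    have hd := (hx m hm).2
    rw [Rsym_eq_Rt, Rt_deriv ha2 (hH m) (hE m) (hgood m hm) (hxpos m hm)] at hd
    rw [Rsym_eq_Rt]; exact hd
  have hDx : ∀ m ∈ G, Dt (nsq a) (nsq (h m)) (eps a (h m)) (x m)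
      = lam m / (2 * Real.log 2) := by
    intro m hm
    have h1 := (hlam m hm).2
    have h2 : 0 < PKKT a (h m) (lam m) := h1 ▸ hxpos m hm
    have := Dt_PKKT ha (hh m) ha2 (hgood m hm) (hlam m hm).1 h2
    rw [h1] at this; exact this
  have hDP0 : ∀ m ∈ G, Dt (nsq a) (nsq (h m)) (eps a (h m)) (P0 m)
      = lam0 / (2 * Real.log 2) :=
    fun m hm => Dt_PKKT ha (hh m) ha2 (hgood m hm) hlam0pos (hP0pos m hm)
  have hRxpos : ∀ m ∈ G, 0 < Rsym a (h m) (x m) := by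
    intro m hm
    rw [hRx m hm]
    exact mul_pos (hxpos m hm) (Dt_pos ha2 (hH m) (hE m) (hgood m hm) (hxpos m hm).le)
  have hbadneg : ∀ m, m ∉ G → ∀ p : ℝ, 0 ≤ p → Rsym a (h m) p < 0 := by
    intro m hm p hp
    rw [Rsym_eq_Rt]
    exact Rt_neg_bad ha2 (hH m) (hE m) (hbad m hm) hp
  have hR0 : ∀ m, Rsym a (h m) 0 < 0 := by
    intro m; rw [Rsym_eq_Rt]; exact Rt_zero_neg ha2
  have hmono : ∀ m ∈ G, ∀ p q : ℝ, 0 ≤ p → p < q → Rsym a (h m) p < Rsym a (h m) q := by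
    intro m hm p q hp hpq
    rw [Rsym_eq_Rt]
    exact Rt_strictMono ha2 (hH m) (hE m) (hgood m hm) hp hpq
  have hκpos : 0 < lam0 / (2 * Real.log 2) := by positivity
  -- a good starting point: positive optimal value
  obtain ⟨g₀, hg₀⟩ := hGne
  have hPbig' : f g₀ * x g₀ < Pbar := by
    have h1 : f g₀ * P0 g₀ ≤ Pbar0 := by
      rw [hPbar0]
      exact Finset.single_le_sum (fun m hm => (mul_pos (hf m) (hP0pos m hm)).le) hg₀
    nlinarith [hxP0 g₀ hg₀, hf g₀]
  set Q0 : Fin M → ℝ := fun m => if m = g₀ then Pbar / f g₀ else 0 with hQ0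
  have hQ0le : ∑ m, f m * Q0 m ≤ Pbar := by
    simp only [hQ0]
    rw [sum_single_ite']
    rw [mul_div_cancel₀ _ (hf g₀).ne']
  have hQ0pos : ∀ m, 0 ≤ Q0 m := by
    intro m
    simp only [hQ0]
    by_cases hm : m = g₀
    · rw [if_pos hm]; exact (div_pos hPbar (hf g₀)).le
    · rw [if_neg hm]
  have hVpos : 0 < ∑ m, f m * max 0 (Rsym a (h m) (Pstar m)) := by
    have hVQ0 : 0 < ∑ m, f m * max 0 (Rsym a (h m) (Q0 m)) := by
      apply Finset.sum_pos' (fun m _ => mul_nonneg (hf m).le (le_max_left _ _))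
      refine ⟨g₀, Finset.mem_univ g₀, ?_⟩
      have hQ0g : Q0 g₀ = Pbar / f g₀ := by simp only [hQ0, if_pos rfl]
      have hxg : x g₀ < Pbar / f g₀ := by
        rw [lt_div_iff₀ (hf g₀)]; nlinarith [hf g₀]
      have hRg : 0 < Rsym a (h g₀) (Q0 g₀) := by
        rw [hQ0g]
        exact lt_trans (hRxpos g₀ hg₀) (hmono g₀ hg₀ _ _ (hxpos g₀ hg₀).le hxg)
      exact mul_pos (hf g₀) (lt_max_of_lt_right hRg)
    exact lt_of_lt_of_le hVQ0 (hopt _ hQ0pos hQ0le)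
  -- there is a good index with positive rate at Pstar
  have hg₁ex : ∃ g₁, g₁ ∈ G ∧ 0 < Rsym a (h g₁) (Pstar g₁) ∧ 0 < Pstar g₁ := by
    have hex : ∃ m, 0 < f m * max 0 (Rsym a (h m) (Pstar m)) := by
      by_contra hcon; push_neg at hcon
      have := Finset.sum_nonpos (fun m (_ : m ∈ Finset.univ) => hcon m)
      linarith
    obtain ⟨g₁, hg₁⟩ := hex
    have hR : 0 < Rsym a (h g₁) (Pstar g₁) := by
      by_contra hc; push_neg at hc
      rw [max_eq_left hc, mul_zero] at hg₁; exact lt_irrefl 0 hg₁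
    have hmem : g₁ ∈ G := by
      by_contra hmem
      exact absurd hR (not_lt.mpr (hbadneg g₁ hmem _ (hPge g₁)).le)
    have hp : 0 < Pstar g₁ := by
      rcases (hPge g₁).lt_or_eq with h1 | h1
      · exact h1
      · exact absurd (h1 ▸ hR) (not_lt.mpr (hR0 g₁).le)
    exact ⟨g₁, hmem, hR, hp⟩
  obtain ⟨g₁, hg₁G, hRg₁, hPg₁⟩ := hg₁ex
  -- all bad channels get zero power
  have hbadzero : ∀ m, m ∉ G → Pstar m = 0 := by
    intro m₀ hm₀
    by_contra hne
    have hpos : 0 < Pstar m₀ := (hPge m₀).lt_of_ne (Ne.symm hne)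
    have hg₁ne : g₁ ≠ m₀ := fun hc => hm₀ (hc ▸ hg₁G)
    have hm₀ne : m₀ ≠ g₁ := fun hc => hg₁ne hc.symm
    set δ := f m₀ * Pstar m₀ / f g₁ with hδ
    have hδpos : 0 < δ := div_pos (mul_pos (hf m₀) hpos) (hf g₁)
    set Q : Fin M → ℝ := fun m => Pstar m + (if m = g₁ then δ else 0)
      - (if m = m₀ then Pstar m₀ else 0) with hQ
    have hQval : ∀ m, Q m = if m = m₀ then 0 else if m = g₁ then Pstar g₁ + δ else Pstar m := by
      intro m
      by_cases h1 : m = m₀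
      · simp [hQ, h1, hm₀ne]
      · by_cases h2 : m = g₁
        · simp [hQ, h1, h2, hg₁ne]
        · simp [hQ, h1, h2]
    have hQnonneg : ∀ m, 0 ≤ Q m := by
      intro m; rw [hQval m]
      by_cases h1 : m = m₀
      · rw [if_pos h1]
      · rw [if_neg h1]
        by_cases h2 : m = g₁
        · rw [if_pos h2]; nlinarith [hPge g₁]
        · rw [if_neg h2]; exact hPge m
    have hQsum : ∑ m, f m * Q m = ∑ m, f m * Pstar m := by
      simp only [hQ]
      have hptw : ∀ m : Fin M, f m * (Pstar m + (if m = g₁ then δ else 0)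
            - (if m = m₀ then Pstar m₀ else 0))
          = f m * Pstar m + f m * (if m = g₁ then δ else 0)
            - f m * (if m = m₀ then Pstar m₀ else 0) := fun m => by ring
      rw [Finset.sum_congr rfl (fun m _ => hptw m)]
      rw [Finset.sum_sub_distrib, Finset.sum_add_distrib, sum_single_ite', sum_single_ite']
      have hc : f g₁ * δ = f m₀ * Pstar m₀ := by
        rw [hδ, mul_div_cancel₀ _ (hf g₁).ne']
      rw [hc]; ring
    have hle := hopt Q hQnonneg (by rw [hQsum]; exact hPle)
    have hQg₁ : Q g₁ = Pstar g₁ + δ := by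
      rw [hQval g₁, if_neg hg₁ne, if_pos rfl]
    have hmono₁ := hmono g₁ hg₁G (Pstar g₁) (Pstar g₁ + δ) (hPge g₁) (by linarith)
    have hlt : ∑ m, f m * max 0 (Rsym a (h m) (Pstar m))
        < ∑ m, f m * max 0 (Rsym a (h m) (Q m)) := by
      apply Finset.sum_lt_sum
      · intro m _
        by_cases h1 : m = m₀
        · rw [h1, hQval m₀, if_pos rfl]
          rw [max_eq_left (hbadneg m₀ hm₀ _ (hPge m₀)).le, max_eq_left (hR0 m₀).le]
        · by_cases h2 : m = g₁
          · rw [h2, hQg₁]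
            exact mul_le_mul_of_nonneg_left
              (max_le_max le_rfl hmono₁.le) (hf g₁).le
          · rw [hQval m, if_neg h1, if_neg h2]
      · refine ⟨g₁, Finset.mem_univ g₁, ?_⟩
        rw [hQg₁]
        apply mul_lt_mul_of_pos_left ?_ (hf g₁)
        rw [max_eq_right hRg₁.le, max_eq_right (by linarith : (0:ℝ) ≤ Rsym a (h g₁) (Pstar g₁ + δ))]
        exact hmono₁
    linarith
    -- the budget is tight
  have hsumeq : ∑ m, f m * Pstar m = Pbar := by
    by_contra hne
    have hlt : ∑ m, f m * Pstar m < Pbar := hPle.lt_of_ne hne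
    set δ := (Pbar - ∑ m, f m * Pstar m) / f g₁ with hδ
    have hδpos : 0 < δ := div_pos (by linarith) (hf g₁)
    set Q : Fin M → ℝ := fun m => Pstar m + (if m = g₁ then δ else 0) with hQ
    have hQnonneg : ∀ m, 0 ≤ Q m := by
      intro m; simp only [hQ]
      by_cases h2 : m = g₁
      · rw [if_pos h2]; nlinarith [hPge m]
      · rw [if_neg h2]; simpa using hPge m
    have hQsum : ∑ m, f m * Q m ≤ Pbar := by
      simp only [hQ]
      have hptw : ∀ m : Fin M, f m * (Pstar m + (if m = g₁ then δ else 0))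
          = f m * Pstar m + f m * (if m = g₁ then δ else 0) := fun m => by ring
      rw [Finset.sum_congr rfl (fun m _ => hptw m), Finset.sum_add_distrib, sum_single_ite']
      rw [hδ, mul_div_cancel₀ _ (hf g₁).ne']
      linarith
    have hQg₁ : Q g₁ = Pstar g₁ + δ := by simp [hQ]
    have hmono₁ := hmono g₁ hg₁G (Pstar g₁) (Pstar g₁ + δ) (hPge g₁) (by linarith)
    have hlt2 : ∑ m, f m * max 0 (Rsym a (h m) (Pstar m))
        < ∑ m, f m * max 0 (Rsym a (h m) (Q m)) := by
      apply Finset.sum_lt_sum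
      · intro m _
        by_cases h2 : m = g₁
        · rw [h2, hQg₁]
          exact mul_le_mul_of_nonneg_left (max_le_max le_rfl hmono₁.le) (hf g₁).le
        · have hQm : Q m = Pstar m := by simp [hQ, h2]
          rw [hQm]
      · refine ⟨g₁, Finset.mem_univ g₁, ?_⟩
        rw [hQg₁]
        apply mul_lt_mul_of_pos_left ?_ (hf g₁)
        rw [max_eq_right hRg₁.le,
          max_eq_right (by linarith : (0:ℝ) ≤ Rsym a (h g₁) (Pstar g₁ + δ))]
        exact hmono₁
    linarith [hopt Q hQnonneg hQsum]
  -- restricted budget identity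
  have hsumG : ∑ m ∈ G, f m * Pstar m = Pbar := by
    rw [← hsumeq]
    exact Finset.sum_subset (Finset.subset_univ G)
      (fun m _ hm => by rw [hbadzero m hm, mul_zero])
  have hP0G : Pbar0 = ∑ m ∈ G, f m * P0 m := by
    simp only [hP0def]; exact hPbar0
  -- main argument: every good channel is active
  have hmain : ∀ g ∈ G, 0 < Pstar g := by
    intro g hgG
    by_contra hng
    have hPg : Pstar g = 0 := le_antisymm (not_lt.mp hng) (hPge g)
    set T : Finset (Fin M) := (G.erase g).filter (fun m => P0 m < Pstar m) with hT
    set S := ∑ m ∈ T, f m * (Pstar m - P0 m) with hS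
    have hTsub : ∀ m ∈ T, m ∈ G ∧ m ≠ g ∧ P0 m < Pstar m := by
      intro m hm
      rw [hT, Finset.mem_filter, Finset.mem_erase] at hm
      exact ⟨hm.1.2, hm.1.1, hm.2⟩
    have hgT : g ∉ T := fun hc => ((hTsub g hc).2.1 rfl)
    have hSge : ∑ m ∈ G.erase g, f m * (Pstar m - P0 m) ≤ S := by
      rw [hS, hT]
      rw [← Finset.sum_filter_add_sum_filter_not (G.erase g) (fun m => P0 m < Pstar m)]
      have hnp : ∑ m ∈ (G.erase g).filter (fun m => ¬ P0 m < Pstar m),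
          f m * (Pstar m - P0 m) ≤ 0 := by
        apply Finset.sum_nonpos
        intro m hm
        rw [Finset.mem_filter] at hm
        have h5 := not_lt.mp hm.2
        nlinarith [hf m]
      linarith
    have herase : ∑ m ∈ G.erase g, f m * (Pstar m - P0 m)
        = Pbar - Pbar0 + f g * P0 g := by
      have h1 : ∑ m ∈ G.erase g, f m * (Pstar m - P0 m)
          = ∑ m ∈ G.erase g, f m * Pstar m - ∑ m ∈ G.erase g, f m * P0 m := by
        rw [← Finset.sum_sub_distrib]; apply Finset.sum_congr rfl; intros; ring
      have h2 : ∑ m ∈ G.erase g, f m * Pstar m = Pbar := by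
        rw [← hsumG]
        exact Finset.sum_erase _ (by rw [hPg, mul_zero])
      have h3 : ∑ m ∈ G.erase g, f m * P0 m = Pbar0 - f g * P0 g := by
        rw [hP0G, ← Finset.sum_erase_add G _ hgG]; ring
      rw [h1, h2, h3]; ring
    have hSgt : f g * x g < S := by
      have h6 := hxP0 g hgG
      nlinarith [hf g]
    have hSpos : 0 < S := lt_trans (mul_pos (hf g) (hxpos g hgG)) hSgt
    have hTne : T.Nonempty := by
      rw [Finset.nonempty_iff_ne_empty]
      intro hTe
      have hS0 : S = 0 := by rw [hS, hTe, Finset.sum_empty]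
      rw [hS0] at hSpos; exact lt_irrefl 0 hSpos
    set θ := f g * x g / S with hθ
    have hθpos : 0 < θ := div_pos (mul_pos (hf g) (hxpos g hgG)) hSpos
    have hθlt : θ < 1 := (div_lt_one hSpos).mpr hSgt
    have hθS : θ * S = f g * x g := by rw [hθ]; field_simp
    set Q : Fin M → ℝ := fun m => Pstar m + (if m = g then x g - Pstar m else 0)
      - (if m ∈ T then θ * (Pstar m - P0 m) else 0) with hQ
    have hQg : Q g = x g := by simp [hQ, hgT]
    have hQT : ∀ m ∈ T, Q m = Pstar m - θ * (Pstar m - P0 m) := by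
      intro m hm
      have h7 := (hTsub m hm).2.1
      simp [hQ, h7, hm]
    have hQo : ∀ m, m ≠ g → m ∉ T → Q m = Pstar m := by
      intro m h1 h2; simp [hQ, h1, h2]
    have hQTgt : ∀ m ∈ T, P0 m < Q m := by
      intro m hm
      rw [hQT m hm]
      have h3 := (hTsub m hm).2.2
      nlinarith
    have hQTlt : ∀ m ∈ T, Q m < Pstar m := by
      intro m hm; rw [hQT m hm]
      have h3 := (hTsub m hm).2.2
      nlinarith
    have hxQ : ∀ m ∈ T, x m < Q m := fun m hm =>
      lt_of_le_of_lt (hxP0 m (hTsub m hm).1) (hQTgt m hm)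
    have hQnonneg : ∀ m, 0 ≤ Q m := by
      intro m
      by_cases h1 : m = g
      · rw [h1, hQg]; exact (hxpos g hgG).le
      · by_cases h2 : m ∈ T
        · have h8 := hQTgt m h2
          have h9 := hP0pos m (hTsub m h2).1
          linarith
        · rw [hQo m h1 h2]; exact hPge m
    have hQsum : ∑ m, f m * Q m ≤ Pbar := by
      simp only [hQ]
      have hptw : ∀ m : Fin M, f m * (Pstar m + (if m = g then x g - Pstar m else 0)
          - (if m ∈ T then θ * (Pstar m - P0 m) else 0))
          = f m * Pstar m + f m * (if m = g then x g - Pstar m else 0)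
            - f m * (if m ∈ T then θ * (Pstar m - P0 m) else 0) := fun m => by ring
      rw [Finset.sum_congr rfl (fun m _ => hptw m), Finset.sum_sub_distrib,
        Finset.sum_add_distrib, sum_single_ite', sum_mem_ite]
      have h4 : ∑ m ∈ T, f m * (θ * (Pstar m - P0 m)) = θ * S := by
        rw [hS, Finset.mul_sum]
        apply Finset.sum_congr rfl; intros; ring
      rw [h4, hsumeq, hPg, hθS]
      have h5 : f g * (x g - 0) = f g * x g := by ring
      rw [h5]
      linarith
    set κ := lam0 / (2 * Real.log 2) with hκ
    have hDg : f g * max 0 (Rsym a (h g) (Q g)) - f g * max 0 (Rsym a (h g) (Pstar g))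
        = f g * Rsym a (h g) (x g) := by
      rw [hQg, hPg, max_eq_right (hRxpos g hgG).le, max_eq_left (hR0 g).le]
      ring
    have hDglb : κ * (f g * x g) ≤ f g * Rsym a (h g) (x g) := by
      rw [hRx g hgG, hDx g hgG, hκ]
      have h2 : lam0 / (2 * Real.log 2) ≤ lam g / (2 * Real.log 2) := by
        apply div_le_div_of_nonneg_right (hlam0le g hgG) (by positivity)
      nlinarith [mul_le_mul_of_nonneg_left h2 (mul_pos (hf g) (hxpos g hgG)).le]
    have hzero : ∀ m, m ≠ g → m ∉ T →
        f m * max 0 (Rsym a (h m) (Q m)) - f m * max 0 (Rsym a (h m) (Pstar m)) = 0 := by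
      intro m h1 h2; rw [hQo m h1 h2]; ring
    have hsum_split : ∑ m, (f m * max 0 (Rsym a (h m) (Q m))
          - f m * max 0 (Rsym a (h m) (Pstar m)))
        = (f g * max 0 (Rsym a (h g) (Q g)) - f g * max 0 (Rsym a (h g) (Pstar g)))
          + ∑ m ∈ T, (f m * max 0 (Rsym a (h m) (Q m))
            - f m * max 0 (Rsym a (h m) (Pstar m))) := by
      have h1 : ∑ m, (f m * max 0 (Rsym a (h m) (Q m))
            - f m * max 0 (Rsym a (h m) (Pstar m)))
          = ∑ m ∈ insert g T, (f m * max 0 (Rsym a (h m) (Q m))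
            - f m * max 0 (Rsym a (h m) (Pstar m))) := by
        apply (Finset.sum_subset (Finset.subset_univ _) ?_).symm
        intro m _ hm
        rw [Finset.mem_insert] at hm
        push_neg at hm
        exact hzero m hm.1 hm.2
      rw [h1, Finset.sum_insert hgT]
    have hDT : ∀ m ∈ T, -(κ * (f m * (θ * (Pstar m - P0 m))))
        < f m * max 0 (Rsym a (h m) (Q m)) - f m * max 0 (Rsym a (h m) (Pstar m)) := by
      intro m hm
      obtain ⟨hmG, hmg, hmlt⟩ := hTsub m hm
      have hQm := hQT m hm
      have hxQm := hxQ m hm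
      have hP0m := hP0pos m hmG
      have hQpos : 0 < Q m := lt_trans hP0m (hQTgt m hm)
      have hRQpos : 0 < Rsym a (h m) (Q m) :=
        lt_trans (hRxpos m hmG) (hmono m hmG _ _ (hxpos m hmG).le hxQm)
      have hRPpos : 0 < Rsym a (h m) (Pstar m) :=
        lt_trans hRQpos (hmono m hmG _ _ hQpos.le (hQTlt m hm))
      rw [max_eq_right hRQpos.le, max_eq_right hRPpos.le]
      have htan : Rsym a (h m) (Pstar m) - Rsym a (h m) (Q m)
          ≤ Dt (nsq a) (nsq (h m)) (eps a (h m)) (Q m) * (Pstar m - Q m) := by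
        have h10 := Rt_tangent ha2 (hH m) (hE m) (hgood m hmG) (le_of_lt hQpos) (hPge m)
        rw [Rsym_eq_Rt]; exact h10
      have hanti : Dt (nsq a) (nsq (h m)) (eps a (h m)) (Q m) < κ := by
        rw [← hDP0 m hmG]
        exact Dt_strictAnti ha2 (hH m) (hE m) (hgood m hmG) (hP0pos m hmG).le (hQTgt m hm)
      have hPQ : Pstar m - Q m = θ * (Pstar m - P0 m) := by rw [hQm]; ring
      rw [hPQ] at htan
      have hpos2 : 0 < θ * (Pstar m - P0 m) := mul_pos hθpos (by linarith)
      have h5 : Rsym a (h m) (Pstar m) - Rsym a (h m) (Q m) < κ * (θ * (Pstar m - P0 m)) :=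
        lt_of_le_of_lt htan (mul_lt_mul_of_pos_right hanti hpos2)
      nlinarith [mul_lt_mul_of_pos_left h5 (hf m)]
    have hsumT := Finset.sum_lt_sum_of_nonempty hTne hDT
    have hsumT' : ∑ m ∈ T, -(κ * (f m * (θ * (Pstar m - P0 m)))) = -(κ * (θ * S)) := by
      have hc : ∀ m ∈ T, -(κ * (f m * (θ * (Pstar m - P0 m))))
          = (-(κ * θ)) * (f m * (Pstar m - P0 m)) := fun m _ => by ring
      rw [Finset.sum_congr rfl hc, ← Finset.mul_sum, ← hS]
      ring
    have h7 : κ * (θ * S) = κ * (f g * x g) := by rw [hθS]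
    have hfinal : 0 < ∑ m, (f m * max 0 (Rsym a (h m) (Q m))
        - f m * max 0 (Rsym a (h m) (Pstar m))) := by
      rw [hsum_split, hDg]
      linarith [hsumT, hsumT', hDglb, h7]
    rw [Finset.sum_sub_distrib] at hfinal
    linarith [hopt Q hQnonneg hQsum]
  -- conclusion
  intro m
  constructor
  · intro hpos
    by_contra hm
    rw [hbadzero m hm] at hpos
    exact lt_irrefl 0 hpos
  · exact hmain m
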